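/- Let α be a unital twisted partial action of a finite group G on a unital ring R. Then R is right noetherian if and only if R*_{α,w}G is right noetherian. -/

import Mathlib

/-- A unital twisted partial action of a group `G` on a unital ring `R`
(Dokuchaev–Exel–Simón).  The ideal `D g` is the ideal generated by the central
idempotent `e g`, i.e. `D g = {x | e g * x = x}`;  `act g` is the isomorphism
`α_g : D g⁻¹ → D g` (its values outside `D g⁻¹` are irrelevant) with inverse
`inv g`, and `w g h` is the invertible twisting element of `D g * D (g*h)`
with inverse `winv g h`. -/
structure UnitalTwistedPartialAction (G : Type) [Group G] (R : Type) [Ring R] where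
  e : G → R
  idem : ∀ g, e g * e g = e g
  central : ∀ g r, e g * r = r * e g
  e_one : e 1 = 1
  act : G → R → R
  inv : G → R → R
  w : G → G → R
  winv : G → G → R
  act_mem : ∀ g x, e g⁻¹ * x = x → e g * act g x = act g x
  act_add : ∀ g x y, e g⁻¹ * x = x → e g⁻¹ * y = y →
    act g (x + y) = act g x + act g y
  act_mul : ∀ g x y, e g⁻¹ * x = x → e g⁻¹ * y = y →
    act g (x * y) = act g x * act g y
  inv_act : ∀ g x, e g⁻¹ * x = x → inv g (act g x) = x
  act_inv : ∀ g x, e g * x = x → act g (inv g x) = x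
  act_one : ∀ x, act 1 x = x
  -- α_g(D_{g⁻¹} D_h) = D_g D_{gh}
  act_range : ∀ g h x, e g⁻¹ * x = x → e h * x = x → e (g * h) * act g x = act g x
  act_range' : ∀ g h y, e g * y = y → e (g * h) * y = y →
    ∃ x, e g⁻¹ * x = x ∧ e h * x = x ∧ act g x = y
  w_mem : ∀ g h, e g * w g h = w g h ∧ e (g * h) * w g h = w g h
  w_winv : ∀ g h, w g h * winv g h = e g * e (g * h)
  winv_w : ∀ g h, winv g h * w g h = e g * e (g * h)
  w_one_left : ∀ g, w 1 g = e g
  w_one_right : ∀ g, w g 1 = e g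
  -- α_g ∘ α_h (a) = w_{g,h} α_{gh}(a) w_{g,h}⁻¹  for a ∈ D_{h⁻¹} D_{(gh)⁻¹}
  comp : ∀ g h a, e h⁻¹ * a = a → e (h⁻¹ * g⁻¹) * a = a →
    act g (act h a) = w g h * act (g * h) a * winv g h
  -- the cocycle identity α_g(a w_{h,t}) w_{g,ht} = α_g(a) w_{g,h} w_{gh,t}
  cocycle : ∀ g h t a, e g⁻¹ * a = a → e h * a = a → e (h * t) * a = a →
    act g (a * w h t) * w g (h * t) = act g a * w g h * w (g * h) t

/-- A realization of the partial crossed product `R *_{α,w} G`:  a ring `A`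
together with maps `δ g : D g → A` (written as maps `R → A` that only depend
on the `D g`-component) such that `A = ⊕_{g ∈ G} δ g (D g)` with the crossed
product multiplication `(a δ_g)(b δ_h) = α_g(α_g⁻¹(a) b) w_{g,h} δ_{gh}`. -/
structure IsCrossedProduct {G R : Type} [Group G] [Ring R]
    (pa : UnitalTwistedPartialAction G R) (A : Type) [Ring A]
    (δ : G → R → A) : Prop where
  proj : ∀ g a, δ g a = δ g (pa.e g * a)
  add : ∀ g a b, δ g (a + b) = δ g a + δ g b
  mul : ∀ g h a b, pa.e g * a = a → pa.e h * b = b →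
    δ g a * δ h b = δ (g * h) (pa.act g (pa.inv g a * b) * pa.w g h)
  one : δ 1 1 = 1
  indep : ∀ (s : Finset G) (a : G → R), (∀ g, pa.e g * a g = a g) →
    (∑ g ∈ s, δ g (a g)) = 0 → ∀ g ∈ s, a g = 0
  span : ∀ x : A, ∃ (s : Finset G) (a : G → R),
    (∀ g, pa.e g * a g = a g) ∧ x = ∑ g ∈ s, δ g (a g)

/-- A ring is semilocal if it is semisimple modulo its Jacobson radical. -/
def IsSemilocalRing (A : Type) [Ring A] : Prop :=
  IsSemisimpleRing (TwoSidedIdeal.jacobson (⊥ : TwoSidedIdeal A)).ringCon.Quotient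

/-- A ring is semiprimary if it is semilocal and its Jacobson radical is nilpotent. -/
def IsSemiprimaryRing' (A : Type) [Ring A] : Prop :=
  IsSemilocalRing A ∧ ∃ n : ℕ, 0 < n ∧ ∀ f : Fin n → A,
    (∀ i, f i ∈ TwoSidedIdeal.jacobson (⊥ : TwoSidedIdeal A)) →
      (List.ofFn f).prod = 0

/-- A ring is right artinian iff its opposite ring is (left) artinian. -/
def IsRightArtinianRing (A : Type) [Ring A] : Prop := IsArtinianRing Aᵐᵒᵖ

/-- A ring is right noetherian iff its opposite ring is (left) noetherian. -/
def IsRightNoetherianRing (A : Type) [Ring A] : Prop := IsNoetherianRing Aᵐᵒᵖ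


section Aux
open MulOpposite
variable {G R : Type} [Group G] [Ring R] {pa : UnitalTwistedPartialAction G R}
  {A : Type} [Ring A] {δ : G → R → A}

lemma pa_mul_e (g : G) (x : R) (h : pa.e g * x = x) : x * pa.e g = x := by
  rw [← pa.central, h]

lemma pa_act_e (g : G) : pa.act g (pa.e g⁻¹) = pa.e g := by
  have hidem := pa.idem g⁻¹
  have hy : pa.e g * pa.act g (pa.e g⁻¹) = pa.act g (pa.e g⁻¹) := pa.act_mem g _ hidem
  obtain ⟨x, hx1, _, hx3⟩ := pa.act_range' g 1 (pa.e g) (pa.idem g)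
    (by rw [mul_one]; exact pa.idem g)
  have h2 : pa.act g (pa.e g⁻¹) * pa.e g = pa.e g := by
    conv_lhs => rw [← hx3]
    rw [← pa.act_mul g _ x hidem hx1, hx1, hx3]
  calc pa.act g (pa.e g⁻¹) = pa.e g * pa.act g (pa.e g⁻¹) := hy.symm
    _ = pa.act g (pa.e g⁻¹) * pa.e g := pa.central g _
    _ = pa.e g := h2

lemma pa_inv_mem (g : G) (c : R) (hc : pa.e g * c = c) :
    pa.e g⁻¹ * pa.inv g c = pa.inv g c := by
  obtain ⟨x, hx1, _, hx3⟩ := pa.act_range' g 1 c hc (by rwa [mul_one])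
  rw [← hx3, pa.inv_act g x hx1]; exact hx1

lemma pa_inv_e (g : G) : pa.inv g (pa.e g) = pa.e g⁻¹ := by
  conv_lhs => rw [← pa_act_e (pa := pa) g]
  exact pa.inv_act g _ (pa.idem g⁻¹)

lemma pa_inv_one (a : R) : pa.inv 1 a = a := by
  have := pa.inv_act 1 a (by rw [inv_one, pa.e_one, one_mul])
  rwa [pa.act_one] at this

variable (hcp : IsCrossedProduct pa A δ)
include hcp

lemma delta_zero (g : G) : δ g 0 = 0 := by
  have h := hcp.add g 0 0
  rw [add_zero] at h
  exact (add_eq_right.mp h.symm)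

lemma delta_sub (g : G) (a b : R) : δ g (a - b) = δ g a - δ g b := by
  have h := hcp.add g (a - b) b
  rw [sub_add_cancel] at h
  rw [h, add_sub_cancel_right]

lemma delta_one_mul (g : G) (a b : R) (hb : pa.e g * b = b) :
    δ 1 a * δ g b = δ g (a * b) := by
  have h := hcp.mul 1 g a b (by rw [pa.e_one, one_mul]) hb
  rw [h, one_mul, pa_inv_one, pa.act_one, pa.w_one_left, mul_assoc,
    pa_mul_e g b hb]

lemma delta_factor (g : G) (c : R) (hc : pa.e g * c = c) :
    δ g c = δ g (pa.e g) * δ 1 (pa.inv g c) := by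
  have h := hcp.mul g 1 (pa.e g) (pa.inv g c) (pa.idem g)
    (by rw [pa.e_one, one_mul])
  rw [h, mul_one, pa_inv_e, pa_inv_mem g c hc, pa.act_inv g c hc,
    pa.w_one_right, pa_mul_e g c hc]

lemma delta_one_component [Fintype G] (c : G → R) (hc : ∀ g, pa.e g * c g = c g)
    (a : R) (h : δ 1 a = ∑ g, δ g (c g)) : a = c 1 := by
  classical
  have hite : ∀ g : G, pa.e g * (if g = 1 then a else 0) = (if g = 1 then a else 0) := by
    intro g; split
    · next hg => subst hg; rw [pa.e_one, one_mul]
    · rw [mul_zero]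
  have hsumite : (∑ g : G, δ g (if g = 1 then a else 0)) = δ 1 a := by
    rw [Finset.sum_eq_single_of_mem 1 (Finset.mem_univ 1)
      (fun b _ hb => by rw [if_neg hb]; exact delta_zero hcp b), if_pos rfl]
  have hzero : (∑ g : G, δ g (c g - (if g = 1 then a else 0))) = 0 := by
    have : ∀ g : G, δ g (c g - (if g = 1 then a else 0))
        = δ g (c g) - δ g (if g = 1 then a else 0) := fun g => delta_sub hcp g _ _
    rw [Finset.sum_congr rfl (fun g _ => this g), Finset.sum_sub_distrib, hsumite,
      ← h, sub_self]
  have := hcp.indep Finset.univ (fun g => c g - (if g = 1 then a else 0))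
    (fun g => by rw [mul_sub, hc g, hite g]) hzero 1 (Finset.mem_univ 1)
  have h1 : c 1 - a = 0 := by simpa using this
  exact (sub_eq_zero.mp h1).symm

lemma delta_span_univ [Fintype G] (x : A) :
    ∃ c : G → R, (∀ g, pa.e g * c g = c g) ∧ x = ∑ g, δ g (c g) := by
  classical
  obtain ⟨s, a, ha, hx⟩ := hcp.span x
  refine ⟨fun g => if g ∈ s then a g else 0, fun g => ?_, ?_⟩
  · dsimp only
    by_cases hg : g ∈ s
    · rw [if_pos hg]; exact ha g
    · rw [if_neg hg, mul_zero]
  · rw [hx]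
    have h1 : (∑ g : G, δ g (if g ∈ s then a g else 0))
        = ∑ g : G, (if g ∈ s then δ g (a g) else 0) :=
      Finset.sum_congr rfl fun g _ => by
        by_cases hg : g ∈ s
        · rw [if_pos hg, if_pos hg]
        · rw [if_neg hg, if_neg hg]; exact delta_zero hcp g
    rw [h1, Finset.sum_ite_mem Finset.univ s (fun g => δ g (a g)), Finset.univ_inter]

/-- Elements of the right ideal of `A` generated by `δ 1 '' I` have all their
components in `I`. -/
lemma key_span [Fintype G] (I : Ideal Rᵐᵒᵖ) (x : Aᵐᵒᵖ)
    (hx : x ∈ Submodule.span Aᵐᵒᵖ {y : Aᵐᵒᵖ | ∃ a : R, op a ∈ I ∧ y = op (δ 1 a)}) :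
    ∃ c : G → R, (∀ g, pa.e g * c g = c g ∧ op (c g) ∈ I) ∧
      unop x = ∑ g, δ g (c g) := by
  classical
  obtain ⟨n, f, v, hsum⟩ := Submodule.mem_span_set'.mp hx
  subst hsum
  have hterm : ∀ i : Fin n, ∃ c : G → R, (∀ g, pa.e g * c g = c g ∧ op (c g) ∈ I) ∧
      unop (f i • (v i : Aᵐᵒᵖ)) = ∑ g, δ g (c g) := by
    intro i
    obtain ⟨a, haI, hva⟩ := (v i).2
    obtain ⟨b, hb, hfb⟩ := delta_span_univ hcp (unop (f i))
    refine ⟨fun g => a * b g, fun g => ?_, ?_⟩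
    · constructor
      · show pa.e g * (a * b g) = a * b g
        rw [← mul_assoc, pa.central, mul_assoc, hb g]
      · exact I.mul_mem_left (op (b g)) haI
    · have : unop (f i • (v i : Aᵐᵒᵖ)) = unop (v i : Aᵐᵒᵖ) * unop (f i) := rfl
      rw [this, hva, unop_op, hfb, Finset.mul_sum]
      exact Finset.sum_congr rfl fun g _ => delta_one_mul hcp g a (b g) (hb g)
  -- combine by induction over the sum
  have main : ∀ (s : Finset (Fin n)), ∃ c : G → R,
      (∀ g, pa.e g * c g = c g ∧ op (c g) ∈ I) ∧
      unop (∑ i ∈ s, f i • (v i : Aᵐᵒᵖ)) = ∑ g, δ g (c g) := by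
    intro s
    induction s using Finset.induction with
    | empty =>
      refine ⟨0, fun g => ⟨mul_zero _, by simp⟩, ?_⟩
      simp [delta_zero hcp]
    | insert j s' hnotmem ih =>
      obtain ⟨c, hc, hcs⟩ := ih
      obtain ⟨d, hd, hds⟩ := hterm j
      refine ⟨d + c, fun g => ⟨?_, I.add_mem (hd g).2 (hc g).2⟩, ?_⟩
      · show pa.e g * (d g + c g) = d g + c g
        rw [mul_add, (hd g).1, (hc g).1]
      rw [Finset.sum_insert hnotmem]
      have : unop (f j • (v j : Aᵐᵒᵖ) + ∑ i ∈ s', f i • (v i : Aᵐᵒᵖ))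
          = unop (f j • (v j : Aᵐᵒᵖ)) + unop (∑ i ∈ s', f i • (v i : Aᵐᵒᵖ)) := rfl
      rw [this, hds, hcs, ← Finset.sum_add_distrib]
      exact Finset.sum_congr rfl fun g _ => (hcp.add g (d g) (c g)).symm
  exact main Finset.univ

end Aux

/-- Let `α` be a unital twisted partial action of a finite
group `G` on a unital ring `R`.  Then `R` is right noetherian if and only if
`R*_{α,w}G` is right noetherian. -/
theorem crossedProduct_rightNoetherian_iff_of_finite_group
    {G R : Type} [Group G] [Finite G] [Ring R]
    (pa : UnitalTwistedPartialAction G R)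
    (A : Type) [Ring A] (δ : G → R → A)
    (hcp : IsCrossedProduct pa A δ) :
    IsRightNoetherianRing R ↔ IsRightNoetherianRing A := by
  classical
  letI : Fintype G := Fintype.ofFinite G
  constructor
  · -- forward: R noetherian implies A noetherian
    intro hR
    haveI : IsNoetherianRing Rᵐᵒᵖ := hR
    let φ : R →+* A :=
      { toFun := δ 1
        map_one' := hcp.one
        map_mul' := fun a b => (delta_one_mul hcp 1 a b (by rw [pa.e_one, one_mul])).symm
        map_zero' := delta_zero hcp 1
        map_add' := hcp.add 1 }
    let ψ : Rᵐᵒᵖ →+* Aᵐᵒᵖ := RingHom.op φ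
    letI : Module Rᵐᵒᵖ Aᵐᵒᵖ := Module.compHom Aᵐᵒᵖ ψ
    haveI : IsScalarTower Rᵐᵒᵖ Aᵐᵒᵖ Aᵐᵒᵖ :=
      ⟨fun r a x => by
        show (ψ r * a) * x = ψ r * (a * x)
        exact mul_assoc _ _ _⟩
    have hfg : (⊤ : Submodule Rᵐᵒᵖ Aᵐᵒᵖ).FG := by
      refine ⟨Finset.image (fun g => MulOpposite.op (δ g (pa.e g))) Finset.univ, ?_⟩
      rw [eq_top_iff]
      rintro x -
      obtain ⟨c, hc, hx⟩ := delta_span_univ hcp (MulOpposite.unop x)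
      have hx' : x = ∑ g : G, MulOpposite.op (δ g (c g)) := by
        apply MulOpposite.unop_injective
        rw [Finset.unop_sum]
        simpa using hx
      rw [hx']
      refine Submodule.sum_mem _ fun g _ => ?_
      have hfac : MulOpposite.op (δ g (c g))
          = (MulOpposite.op (pa.inv g (c g)) : Rᵐᵒᵖ) • MulOpposite.op (δ g (pa.e g)) := by
        show MulOpposite.op (δ g (c g))
          = MulOpposite.op (δ g (pa.e g) * δ 1 (pa.inv g (c g)))
        exact congrArg MulOpposite.op (delta_factor hcp g (c g) (hc g))
      rw [hfac]
      exact Submodule.smul_mem _ _ (Submodule.subset_span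
        (by simp [Finset.coe_image]))
    haveI : Module.Finite Rᵐᵒᵖ Aᵐᵒᵖ := Module.finite_def.mpr hfg
    haveI : IsNoetherian Rᵐᵒᵖ Aᵐᵒᵖ := isNoetherian_of_isNoetherianRing_of_finite Rᵐᵒᵖ Aᵐᵒᵖ
    have : IsNoetherian Aᵐᵒᵖ Aᵐᵒᵖ := isNoetherian_of_tower Rᵐᵒᵖ this
    exact this
  · -- backward: A noetherian implies R noetherian
    intro hA
    show IsNoetherianRing Rᵐᵒᵖ
    have hAm : IsNoetherian Aᵐᵒᵖ Aᵐᵒᵖ := hA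
    rw [isNoetherianRing_iff, ← monotone_stabilizes_iff_noetherian]
    intro f
    set F : Ideal Rᵐᵒᵖ → Submodule Aᵐᵒᵖ Aᵐᵒᵖ := fun I =>
      Submodule.span Aᵐᵒᵖ {y : Aᵐᵒᵖ | ∃ a : R, MulOpposite.op a ∈ I ∧ y = MulOpposite.op (δ 1 a)}
      with hF
    have hFmono : Monotone F := fun I J hIJ => Submodule.span_mono
      (by rintro y ⟨a, ha, rfl⟩; exact ⟨a, hIJ ha, rfl⟩)
    obtain ⟨n, hn⟩ := (monotone_stabilizes_iff_noetherian.mpr hAm)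
      ⟨fun k => F (f k), fun i j h => hFmono (f.mono h)⟩
    refine ⟨n, fun m hm => le_antisymm (f.mono hm) ?_⟩
    intro x hx
    have h1 : MulOpposite.op (δ 1 (MulOpposite.unop x)) ∈ F (f m) :=
      Submodule.subset_span ⟨MulOpposite.unop x, by simpa using hx, rfl⟩
    have h2 : MulOpposite.op (δ 1 (MulOpposite.unop x)) ∈ F (f n) := by
      have heq : F (f n) = F (f m) := hn m hm
      rwa [heq]
    obtain ⟨c, hc, heq⟩ := key_span hcp (f n) _ h2
    rw [MulOpposite.unop_op] at heq
    have hx1 : MulOpposite.unop x = c 1 :=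
      delta_one_component hcp c (fun g => (hc g).1) _ heq
    have : MulOpposite.op (c 1) ∈ f n := (hc 1).2
    rw [← hx1] at this
    simpa using this
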